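/- Let n be prime and c the cyclic shift on [n]. The set of nonconstant words w : [n] → ℙ is the disjoint union over all π ∈ S_n of the sets A(π, Des(π c π⁻¹)). -/

import Mathlib

/-- The (0-indexed) descent set of a map `σ : Fin n → Fin n`:
positions `i` with `σ(i) > σ(i+1)`. -/
def desSet (n : ℕ) (σ : Fin n → Fin n) : Set ℕ :=
  {i | ∃ h : i + 1 < n, σ ⟨i + 1, h⟩ < σ ⟨i, Nat.lt_of_succ_lt h⟩}

/-- `χ ∈ A(π, S)`: the coloring `χ` is weakly increasing along `π⁻¹(0), …, π⁻¹(n-1)`,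
strictly from position `i` to `i+1` whenever `i ∈ S`. -/
def inA (n : ℕ) (π : Equiv.Perm (Fin n)) (S : Set ℕ) (χ : Fin n → ℕ) : Prop :=
  ∀ i : ℕ, ∀ h : i + 1 < n,
    χ (π.symm ⟨i, Nat.lt_of_succ_lt h⟩) ≤ χ (π.symm ⟨i + 1, h⟩) ∧
    (i ∈ S → χ (π.symm ⟨i, Nat.lt_of_succ_lt h⟩) < χ (π.symm ⟨i + 1, h⟩))

section Aux

variable {n : ℕ} [NeZero n]

noncomputable local instance lexLin : LinearOrder (Lex (Fin n → ℕ)) :=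
  @Pi.Lex.linearOrder (Fin n) (fun _ => ℕ) inferInstance
    (inferInstance : WellFoundedLT (Fin n)) inferInstance

lemma lexLt_iff {a b : Fin n → ℕ} :
    toLex a < toLex b ↔ ∃ i : Fin n, (∀ j, j < i → a j = b j) ∧ a i < b i := Iff.rfl

/-- If a word is invariant under a nonzero shift and `n` is prime, it is constant. -/
lemma shift_const (hn : n.Prime) {w : Fin n → ℕ} {d : Fin n} (hd : d ≠ 0)
    (hstep : ∀ x, w (x + d) = w x) : ∀ i, w i = w 0 := by
  have h1 : addOrderOf d ∣ n := by
    have := addOrderOf_dvd_card (x := d)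
    simpa using this
  have h2 : addOrderOf d = n := by
    rcases hn.eq_one_or_self_of_dvd _ h1 with h | h
    · exact absurd (AddMonoid.addOrderOf_eq_one_iff.mp h) hd
    · exact h
  have htop : AddSubgroup.zmultiples d = ⊤ := by
    apply AddSubgroup.eq_top_of_card_eq
    rw [Nat.card_zmultiples, h2, Nat.card_eq_fintype_card, Fintype.card_fin]
  have hz : ∀ (m : ℤ) (x : Fin n), w (x + m • d) = w x := by
    intro m
    induction m using Int.induction_on with
    | zero => intro x; simp
    | succ k ih =>
        intro x
        have e : ((k : ℤ) + 1) • d = (k : ℤ) • d + d := by rw [add_smul, one_smul]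
        rw [e, ← add_assoc, hstep, ih]
    | pred k ih =>
        intro x
        have e : (-(k : ℤ) - 1) • d + d = (-(k : ℤ)) • d := by
          have : (-(k : ℤ) - 1) • d + (1 : ℤ) • d = (-(k : ℤ) - 1 + 1) • d := (add_smul _ _ _).symm
          simpa using this
        have := hstep (x + (-(k : ℤ) - 1) • d)
        rw [add_assoc, e] at this
        rw [← this, ih]
  intro i
  obtain ⟨m, hm⟩ := AddSubgroup.mem_zmultiples_iff.mp
    (htop ▸ AddSubgroup.mem_top i : i ∈ AddSubgroup.zmultiples d)
  calc w i = w (0 + m • d) := by rw [zero_add, hm]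
    _ = w 0 := hz m 0

/-- Key: two distinct positions in a nonconstant word (n prime) differ somewhere on
their cyclic tails. -/
lemma key_diff (hn : n.Prime) {w : Fin n → ℕ} (hw : ¬ ∃ a, ∀ i, w i = a)
    {p q : Fin n} (hpq : p ≠ q) : ∃ k : Fin n, w (p + k) ≠ w (q + k) := by
  by_contra hcon
  push_neg at hcon
  refine hw ⟨w 0, fun i => ?_⟩
  have hd : q - p ≠ 0 := sub_ne_zero.mpr (Ne.symm hpq)
  have hstep : ∀ x, w (x + (q - p)) = w x := by
    intro x
    have h := hcon (x - p)
    have e1 : p + (x - p) = x := by abel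
    have e2 : q + (x - p) = x + (q - p) := by abel
    rw [e1, e2] at h
    exact h.symm
  exact shift_const hn hd hstep i

end Aux

section Aux2

variable {n : ℕ} [NeZero n]

lemma fin_one_add_mk (hn2 : 1 < n) (m : ℕ) (h : m + 1 < n) :
    (1 : Fin n) + ⟨m, Nat.lt_of_succ_lt h⟩ = ⟨m + 1, h⟩ := by
  have hone : ((1 : Fin n) : ℕ) = 1 := by
    rw [Fin.val_one']; exact Nat.mod_eq_of_lt hn2
  apply Fin.ext
  rw [Fin.val_add, hone]
  rw [Nat.add_comm]
  simpa using Nat.mod_eq_of_lt h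

/-- The lexicographic comparison key of position `p` in word `w`. -/
abbrev gword (w : Fin n → ℕ) (p : Fin n) : Lex (Fin n → ℕ) :=
  toLex (fun k => w (p + k))

lemma gL1 {w : Fin n → ℕ} {p q : Fin n}
    (h : gword w p < gword w q) : w p ≤ w q := by
  obtain ⟨k, h1, h2⟩ := lexLt_iff.mp h
  rcases eq_or_ne k 0 with rfl | hk
  · simpa using le_of_lt h2
  · have := h1 0 ((Fin.pos_iff_ne_zero' k).mpr hk)
    simpa using le_of_eq this

lemma gL2 (hn2 : 1 < n) {w : Fin n → ℕ} {p q : Fin n}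
    (h : gword w p < gword w q) (heq : w p = w q) :
    gword w (p + 1) < gword w (q + 1) := by
  obtain ⟨k, h1, h2⟩ := lexLt_iff.mp h
  have hk : k ≠ 0 := by
    rintro rfl
    simp only [add_zero] at h2
    exact absurd h2 (by rw [heq]; exact lt_irrefl _)
  have hk1 : 1 ≤ (k : ℕ) := Nat.one_le_iff_ne_zero.mpr (fun h0 => hk (Fin.ext h0))
  have hklt : (k : ℕ) < n := k.isLt
  refine lexLt_iff.mpr ⟨⟨(k : ℕ) - 1, by omega⟩, ?_, ?_⟩
  · intro j hj
    have hjv : (j : ℕ) < (k : ℕ) - 1 := hj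
    have hj1n : (j : ℕ) + 1 < n := by omega
    have e : (1 : Fin n) + j = ⟨(j : ℕ) + 1, hj1n⟩ := by
      have := fin_one_add_mk hn2 (j : ℕ) hj1n
      simpa using this
    have hlt : (⟨(j : ℕ) + 1, hj1n⟩ : Fin n) < k := by
      rw [Fin.lt_def]; simp; omega
    have := h1 ⟨(j : ℕ) + 1, hj1n⟩ hlt
    simp only [add_assoc, e]
    exact this
  · have e : (1 : Fin n) + ⟨(k : ℕ) - 1, by omega⟩ = k := by
      have h' : ((k : ℕ) - 1) + 1 < n := by omega
      have := fin_one_add_mk hn2 ((k : ℕ) - 1) h'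
      rw [this]
      apply Fin.ext; simp; omega
    simp only [add_assoc, e]
    exact h2

end Aux2

/-- For `n` prime and `c` the cyclic shift on `Fin n`, the set of
nonconstant words `w : Fin n → ℕ` is the disjoint union over all permutations `π`
of the sets `A(π, Des(π c π⁻¹))`: every nonconstant word lies in exactly one. -/
theorem nonconstant_partition (n : ℕ) [NeZero n] (hn : n.Prime) (w : Fin n → ℕ)
    (hw : ¬ ∃ a, ∀ i, w i = a) :
    ∃! π : Equiv.Perm (Fin n),
      inA n π (desSet n ⇑(π * Equiv.addRight (1 : Fin n) * π⁻¹)) w := by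
  have hn2 : 1 < n := hn.one_lt
  letI : LinearOrder (Lex (Fin n → ℕ)) := lexLin
  letI : WellFoundedLT (Fin n) := inferInstance
  have hginj : Function.Injective (gword w) := by
    intro p q h
    by_contra hpq
    obtain ⟨k, hk⟩ := key_diff hn hw hpq
    exact hk (congrFun (congrArg ofLex h) k)
  set ρ : Equiv.Perm (Fin n) := Tuple.sort (gword w) with hρdef
  have hmono : StrictMono (gword w ∘ ρ) :=
    (Tuple.monotone_sort (gword w)).strictMono_of_injective (hginj.comp ρ.injective)
  have hcoe : ∀ (π : Equiv.Perm (Fin n)) (x : Fin n),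
      (⇑(π * Equiv.addRight (1 : Fin n) * π⁻¹)) x = π (π.symm x + 1) := by
    intro π x
    simp [Equiv.Perm.mul_apply, Equiv.Perm.inv_def]
  have hρsymm : (ρ⁻¹ : Equiv.Perm (Fin n)).symm = ρ := by
    rw [Equiv.Perm.inv_def, Equiv.symm_symm]
  refine ⟨ρ⁻¹, ?_, ?_⟩
  · -- existence
    intro i h
    have hlt : (⟨i, Nat.lt_of_succ_lt h⟩ : Fin n) < ⟨i + 1, h⟩ := by
      rw [Fin.lt_def]; exact Nat.lt_succ_self i
    have hg : gword w (ρ ⟨i, Nat.lt_of_succ_lt h⟩) < gword w (ρ ⟨i + 1, h⟩) := hmono hlt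
    rw [hρsymm]
    refine ⟨gL1 hg, ?_⟩
    intro hdes
    obtain ⟨h', hlt'⟩ := hdes
    by_contra hnlt
    have heq : w (ρ ⟨i, Nat.lt_of_succ_lt h⟩) = w (ρ ⟨i + 1, h⟩) :=
      le_antisymm (gL1 hg) (le_of_not_gt hnlt)
    have hg2 : gword w (ρ ⟨i, Nat.lt_of_succ_lt h⟩ + 1) < gword w (ρ ⟨i + 1, h⟩ + 1) :=
      gL2 hn2 hg heq
    rw [hcoe, hcoe, hρsymm] at hlt'
    have := hmono hlt'
    simp only [Function.comp_apply, Equiv.Perm.inv_def, Equiv.apply_symm_apply] at this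
    exact absurd hg2 (asymm this)
  · -- uniqueness
    intro π' hπ'
    -- weak monotonicity of w along ranks
    have F1 : ∀ b (hb : b < n) a (hab : a ≤ b),
        w (π'.symm ⟨a, lt_of_le_of_lt hab hb⟩) ≤ w (π'.symm ⟨b, hb⟩) := by
      intro b
      induction b with
      | zero =>
          intro hb a hab
          have : a = 0 := Nat.le_zero.mp hab
          subst this; exact le_refl _
      | succ b ih =>
          intro hb a hab
          rcases Nat.lt_or_ge a (b + 1) with hab' | hab'
          · have h1 := ih (Nat.lt_of_succ_lt hb) a (Nat.lt_succ_iff.mp hab')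
            have h2 := (hπ' b hb).1
            exact le_trans h1 h2
          · have : a = b + 1 := le_antisymm hab hab'
            subst this; exact le_refl _
    -- adjacent equal values force increasing successor-ranks
    have F2 : ∀ m (h : m + 1 < n),
        w (π'.symm ⟨m, Nat.lt_of_succ_lt h⟩) = w (π'.symm ⟨m + 1, h⟩) →
        π' (π'.symm ⟨m, Nat.lt_of_succ_lt h⟩ + 1) < π' (π'.symm ⟨m + 1, h⟩ + 1) := by
      intro m h heq
      have hnotdes : m ∉ desSet n ⇑(π' * Equiv.addRight (1 : Fin n) * π'⁻¹) := by
        intro hdes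
        exact absurd ((hπ' m h).2 hdes) (by rw [heq]; exact lt_irrefl _)
      have hne : (⇑(π' * Equiv.addRight (1 : Fin n) * π'⁻¹)) ⟨m, Nat.lt_of_succ_lt h⟩ ≠
          (⇑(π' * Equiv.addRight (1 : Fin n) * π'⁻¹)) ⟨m + 1, h⟩ := by
        intro hcontra
        have := (π' * Equiv.addRight (1 : Fin n) * π'⁻¹).injective hcontra
        exact absurd (congrArg Fin.val this) (by simp)
      have hle : ¬ ((⇑(π' * Equiv.addRight (1 : Fin n) * π'⁻¹)) ⟨m + 1, h⟩ <
          (⇑(π' * Equiv.addRight (1 : Fin n) * π'⁻¹)) ⟨m, Nat.lt_of_succ_lt h⟩) := by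
        intro hcontra
        exact hnotdes ⟨h, hcontra⟩
      have := lt_of_le_of_ne (le_of_not_gt hle) hne
      rwa [hcoe, hcoe] at this
    -- equal values at distance force increasing successor-ranks
    have F3 : ∀ b (hb : b < n) a (hab : a < b),
        w (π'.symm ⟨a, lt_trans hab hb⟩) = w (π'.symm ⟨b, hb⟩) →
        π' (π'.symm ⟨a, lt_trans hab hb⟩ + 1) < π' (π'.symm ⟨b, hb⟩ + 1) := by
      intro b
      induction b with
      | zero => intro _ a hab; exact absurd hab (Nat.not_lt_zero a)
      | succ b ih =>
          intro hb a hab heq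
          rcases Nat.lt_or_ge a b with hab' | hab'
          · have hwab : w (π'.symm ⟨a, lt_trans hab hb⟩) = w (π'.symm ⟨b, Nat.lt_of_succ_lt hb⟩) := by
              refine le_antisymm (F1 b (Nat.lt_of_succ_lt hb) a (le_of_lt hab')) ?_
              calc w (π'.symm ⟨b, Nat.lt_of_succ_lt hb⟩)
                  ≤ w (π'.symm ⟨b + 1, hb⟩) := (hπ' b hb).1
                _ = w (π'.symm ⟨a, lt_trans hab hb⟩) := heq.symm
            have h1 := ih (Nat.lt_of_succ_lt hb) a hab' hwab
            have hwb : w (π'.symm ⟨b, Nat.lt_of_succ_lt hb⟩) = w (π'.symm ⟨b + 1, hb⟩) := by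
              rw [← hwab, heq]
            have h2 := F2 b hb hwb
            exact lt_trans h1 h2
          · have : a = b := le_antisymm (Nat.lt_succ_iff.mp hab) hab'
            subst this
            exact F2 a hb heq
    -- main induction on the first-difference index
    have main : ∀ d : ℕ, ∀ (i j : Fin n), i < j →
        (∀ m : Fin n, (m : ℕ) < d → w (π'.symm i + m) = w (π'.symm j + m)) →
        ∀ hd : d < n, w (π'.symm i + ⟨d, hd⟩) ≠ w (π'.symm j + ⟨d, hd⟩) →
        w (π'.symm i + ⟨d, hd⟩) < w (π'.symm j + ⟨d, hd⟩) := by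
      intro d
      induction d with
      | zero =>
          intro i j hij hagree hd hne
          have hz : (⟨0, hd⟩ : Fin n) = 0 := by
            apply Fin.ext; simp
          simp only [hz, add_zero] at hne ⊢
          exact lt_of_le_of_ne (F1 (j : ℕ) j.isLt (i : ℕ) (le_of_lt hij)) hne
      | succ d ih =>
          intro i j hij hagree hd hne
          have hw0 : w (π'.symm i) = w (π'.symm j) := by
            have := hagree 0 (by simp)
            simpa using this
          have hui : π' (π'.symm i + 1) < π' (π'.symm j + 1) :=
            F3 (j : ℕ) j.isLt (i : ℕ) hij hw0
          have hsi : π'.symm (π' (π'.symm i + 1)) = π'.symm i + 1 := Equiv.symm_apply_apply _ _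
          have hsj : π'.symm (π' (π'.symm j + 1)) = π'.symm j + 1 := Equiv.symm_apply_apply _ _
          have hone : (1 : Fin n) + ⟨d, Nat.lt_of_succ_lt hd⟩ = ⟨d + 1, hd⟩ :=
            fin_one_add_mk hn2 d hd
          have hagree2 : ∀ m : Fin n, (m : ℕ) < d →
              w (π'.symm (π' (π'.symm i + 1)) + m) = w (π'.symm (π' (π'.symm j + 1)) + m) := by
            intro m hm
            rw [hsi, hsj]
            have hm1 : (m : ℕ) + 1 < n := by omega
            have e : (1 : Fin n) + m = ⟨(m : ℕ) + 1, hm1⟩ := by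
              have := fin_one_add_mk hn2 (m : ℕ) hm1
              simpa using this
            rw [add_assoc, add_assoc, e]
            exact hagree ⟨(m : ℕ) + 1, hm1⟩ (by simp; omega)
          have hne2 : w (π'.symm (π' (π'.symm i + 1)) + ⟨d, Nat.lt_of_succ_lt hd⟩) ≠
              w (π'.symm (π' (π'.symm j + 1)) + ⟨d, Nat.lt_of_succ_lt hd⟩) := by
            rw [hsi, hsj, add_assoc, add_assoc, hone]
            exact hne
          have := ih (π' (π'.symm i + 1)) (π' (π'.symm j + 1)) hui hagree2
            (Nat.lt_of_succ_lt hd) hne2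
          rw [hsi, hsj, add_assoc, add_assoc, hone] at this
          exact this
    -- strict monotonicity of gword ∘ π'.symm
    have hstrict : StrictMono (gword w ∘ π'.symm) := by
      intro i j hij
      have hpq : π'.symm i ≠ π'.symm j := fun hc => absurd (π'.symm.injective hc) (ne_of_lt hij)
      obtain ⟨k, hk⟩ := key_diff hn hw hpq
      classical
      have hexq : ∃ d : ℕ, ∃ hd : d < n,
          w (π'.symm i + ⟨d, hd⟩) ≠ w (π'.symm j + ⟨d, hd⟩) := ⟨(k : ℕ), k.isLt, by
        simpa using hk⟩
      obtain ⟨hd, hne⟩ := Nat.find_spec hexq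
      have hagree : ∀ m : Fin n, (m : ℕ) < Nat.find hexq →
          w (π'.symm i + m) = w (π'.symm j + m) := by
        intro m hm
        have hmin := Nat.find_min hexq hm
        push_neg at hmin
        exact hmin m.isLt
      have hmain := main (Nat.find hexq) i j hij hagree hd hne
      exact lexLt_iff.mpr ⟨⟨Nat.find hexq, hd⟩, fun m hm => hagree m hm, hmain⟩
    -- conclude π' = ρ⁻¹
    have hrange : Set.range (gword w ∘ π'.symm) = Set.range (gword w ∘ ρ) := by
      rw [Set.range_comp, Set.range_comp, Equiv.range_eq_univ, Equiv.range_eq_univ]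
    have heqf : (gword w ∘ π'.symm) = (gword w ∘ ρ) :=
      (hstrict.range_inj hmono).mp hrange
    have hsymm_eq : π'.symm = (ρ : Equiv.Perm (Fin n)) := by
      apply Equiv.ext
      intro x
      exact hginj (congrFun heqf x)
    rw [Equiv.Perm.inv_def, ← hsymm_eq, Equiv.symm_symm]
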